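/- Let τ ∈ ℂ with Im τ > 0 and λ, κ ∈ ℂ satisfy ϑ₁(λ,τ) ≠ 0, ϑ₁(κ,τ) ≠ 0, ϑ₁(κ+λ,τ) ≠ 0, ϑ₁(κ−λ,τ) ≠ 0, and 2κ ∉ ℤ + τℤ. Define G(z,μ) = ϑ₁′(0,τ)·ϑ₁(z+μ,τ)/(ϑ₁(z,τ)·ϑ₁(μ,τ)). Then there is no ρ ∈ ℂ such that G(z,λ)·G(−z,λ) = (G(z,κ) + ρ)·(G(−z,κ) + ρ) for all z ∈ ℂ with ϑ₁(z,τ) ≠ 0. (Equivalently, the elliptic Shibukawa–Ueno operator 𝓡^e(λ) has no eigenvalues; this is the key step showing it has no finite-dimensional invariant subspaces.) -/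

import Mathlib

open Complex

/-- Jacobi's first theta function
`ϑ₁(z,τ) = −∑_{m∈ℤ} exp(πi(m+1/2)²τ + 2πi(m+1/2)(z+1/2))` (here `theta1 τ z = ϑ₁(z,τ)`). -/
noncomputable def theta1 (τ z : ℂ) : ℂ :=
  -∑' m : ℤ, Complex.exp ((Real.pi : ℂ) * Complex.I * ((m : ℂ) + 1 / 2) ^ 2 * τ +
    2 * (Real.pi : ℂ) * Complex.I * ((m : ℂ) + 1 / 2) * (z + 1 / 2))

/-- `G(z,μ) = ϑ₁′(0)ϑ₁(z+μ)/(ϑ₁(z)ϑ₁(μ))`. -/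
noncomputable def Gell (τ z μ : ℂ) : ℂ :=
  deriv (theta1 τ) 0 * theta1 τ (z + μ) / (theta1 τ z * theta1 τ μ)


noncomputable section
open Real

namespace NoEig

/-! ### Generic helpers -/

lemma exp_eq (X Y : ℂ) (k : ℤ) (h : X = Y + k * (2 * (Real.pi:ℂ) * I)) :
    cexp X = cexp Y := by
  rw [h, Complex.exp_add, Complex.exp_int_mul_two_pi_mul_I, mul_one]

lemma exp_eq_neg (X Y : ℂ) (k : ℤ) (h : X = Y + (Real.pi:ℂ) * I + k * (2 * (Real.pi:ℂ) * I)) :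
    cexp X = - cexp Y := by
  rw [h, Complex.exp_add, Complex.exp_int_mul_two_pi_mul_I, mul_one, Complex.exp_add,
    Complex.exp_pi_mul_I, mul_neg_one]

lemma norm_cexp_quad (τ : ℂ) (x y : ℝ) :
    ‖cexp ((Real.pi:ℂ) * I * τ * (x:ℂ) + (Real.pi:ℂ) * I * (y:ℂ))‖ = rexp (-Real.pi * τ.im * x) := by
  rw [Complex.norm_exp]
  congr 1
  simp [Complex.add_re, Complex.mul_re, Complex.mul_im, Complex.I_re, Complex.I_im]

lemma norm_term_eq (τ : ℂ) (c : ℂ) (x y : ℝ) (X : ℂ)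
    (hX : X = (Real.pi:ℂ) * I * τ * (x:ℂ) + (Real.pi:ℂ) * I * (y:ℂ)) :
    ‖c * cexp X‖ = ‖c‖ * rexp (-Real.pi * τ.im * x) := by
  rw [hX, norm_mul, norm_cexp_quad]

lemma summable_weight (a : ℝ) {T : ℝ} (hT : 0 < T) :
    Summable fun n : ℤ => (2 * |(n:ℝ)| + 3) * rexp (-Real.pi * T * ((n:ℝ) + a) ^ 2) := by
  have h1 := summable_pow_mul_jacobiTheta₂_term_bound (T * |a|) hT 1
  have h0 := summable_pow_mul_jacobiTheta₂_term_bound (T * |a|) hT 0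
  refine ((h1.mul_left 2).add (h0.mul_left 3)).of_nonneg_of_le
    (fun n => by positivity) (fun n => ?_)
  have hb : rexp (-Real.pi * T * ((n:ℝ) + a) ^ 2)
      ≤ rexp (-Real.pi * (T * (n:ℝ) ^ 2 - 2 * (T * |a|) * |(n:ℝ)|)) := by
    apply Real.exp_le_exp.mpr
    have h1 : -((n:ℝ) * a) ≤ |(n:ℝ)| * |a| := by
      rw [← abs_mul]; exact neg_le_abs _
    have h2 : T * (n:ℝ) ^ 2 - 2 * (T * |a|) * |(n:ℝ)| ≤ T * ((n:ℝ) + a) ^ 2 := by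
      nlinarith [sq_nonneg a, hT.le, mul_nonneg hT.le (sq_nonneg a)]
    have h3 := mul_le_mul_of_nonneg_left h2 Real.pi_pos.le
    linarith
  have hcast : ((|n| : ℤ) : ℝ) = |(n:ℝ)| := by push_cast; rfl
  calc (2 * |(n:ℝ)| + 3) * rexp (-Real.pi * T * ((n:ℝ) + a) ^ 2)
      ≤ (2 * |(n:ℝ)| + 3) * rexp (-Real.pi * (T * (n:ℝ) ^ 2 - 2 * (T * |a|) * |(n:ℝ)|)) := by
        apply mul_le_mul_of_nonneg_left hb (by positivity)
    _ = 2 * (((|n| : ℤ):ℝ) ^ 1 * rexp (-Real.pi * (T * (n:ℝ) ^ 2 - 2 * (T * |a|) * ((|n| : ℤ):ℝ))))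
        + 3 * (((|n| : ℤ):ℝ) ^ 0 * rexp (-Real.pi * (T * (n:ℝ) ^ 2 - 2 * (T * |a|) * ((|n| : ℤ):ℝ)))) := by
        rw [hcast]; ring

lemma sumnorm (τ : ℂ) (hτ : 0 < τ.im) (a : ℝ) (c : ℤ → ℂ) (y : ℤ → ℝ) (X : ℤ → ℂ)
    (hX : ∀ n, X n = (Real.pi:ℂ) * I * τ * (((((n:ℝ) + a)) ^ 2 : ℝ):ℂ) + (Real.pi:ℂ) * I * ((y n : ℝ):ℂ))
    (hc : ∀ n, ‖c n‖ ≤ 2 * |(n:ℝ)| + 3) :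
    Summable fun n : ℤ => ‖c n * cexp (X n)‖ := by
  refine (summable_weight a hτ).of_nonneg_of_le (fun n => norm_nonneg _) (fun n => ?_)
  rw [norm_term_eq τ (c n) _ _ _ (hX n)]
  exact mul_le_mul_of_nonneg_right (hc n) (Real.exp_nonneg _)

lemma tsum_zero_of_odd (g : ℤ → ℂ) (h : ∀ n, g (-n) = - g n) : ∑' n, g n = 0 := by
  have h1 : ∑' n, g (-n) = ∑' n, g n := by
    simpa using (Equiv.neg ℤ).tsum_eq g
  have h2 : ∑' n, g (-n) = - ∑' n, g n := by
    rw [funext h]; exact tsum_neg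
  have h3 : ∑' n, g n = - ∑' n, g n := h1.symm.trans h2
  linear_combination (h3 : _) / 2

def negOne : ℤ ≃ ℤ := ⟨fun n => -n-1, fun n => -n-1,
  fun n => by simp only []; omega, fun n => by simp only []; omega⟩

lemma tsum_prod_zero_of (F : ℤ × ℤ → ℂ) (h : ∀ p : ℤ × ℤ, F (p.1, -p.2-1) = - F p) :
    ∑' p, F p = 0 := by
  have h1 : ∑' p : ℤ × ℤ, F (p.1, -p.2-1) = ∑' p, F p := by
    have := (Equiv.prodCongr (Equiv.refl ℤ) negOne).tsum_eq F
    rw [← this]; exact tsum_congr (fun p => rfl)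
  have h2 : ∑' p : ℤ × ℤ, F (p.1, -p.2-1) = - ∑' p, F p := by
    rw [funext h]; exact tsum_neg
  have h3 : ∑' p, F p = - ∑' p, F p := h1.symm.trans h2
  linear_combination (h3 : _) / 2

def Epar : Set (ℤ × ℤ) := {p | Even (p.1 + p.2)}

def eqv1 : ℤ × ℤ ≃ ↥Epar where
  toFun p := ⟨(p.1 + p.2, p.1 - p.2), ⟨p.1, by omega⟩⟩
  invFun q := ((q.1.1 + q.1.2)/2, (q.1.1 - q.1.2)/2)
  left_inv p := by ext <;> simp <;> omega
  right_inv q := by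
    obtain ⟨⟨a, b⟩, r, hr⟩ := q
    ext <;> simp <;> omega

def eqv2 : ℤ × ℤ ≃ ↥(Eparᶜ) where
  toFun p := ⟨(p.1 + p.2 + 1, p.1 - p.2), by
    rintro ⟨r, hr⟩
    simp only at hr
    omega⟩
  invFun q := ((q.1.1 + q.1.2 - 1)/2, (q.1.1 - q.1.2 - 1)/2)
  left_inv p := by ext <;> simp <;> omega
  right_inv q := by
    obtain ⟨⟨a, b⟩, hq⟩ := q
    have : ¬ Even (a + b) := hq
    rw [Int.even_iff] at this
    ext <;> simp <;> omega

lemma tsum_split (F : ℤ × ℤ → ℂ) (hF : Summable F) :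
    ∑' p, F p = (∑' p : ℤ × ℤ, F (p.1 + p.2, p.1 - p.2))
      + ∑' p : ℤ × ℤ, F (p.1 + p.2 + 1, p.1 - p.2) := by
  rw [← Summable.tsum_add_tsum_compl (s := Epar) (hF.subtype Epar) (hF.subtype Eparᶜ)]
  congr 1
  · rw [← eqv1.tsum_eq]; exact tsum_congr (fun p => rfl)
  · rw [← eqv2.tsum_eq]; exact tsum_congr (fun p => rfl)

/-! ### The theta-constant series -/

def e2 (τ : ℂ) (n : ℤ) : ℂ := cexp ((Real.pi:ℂ) * I * τ * ((n:ℂ) + 1/2) ^ 2)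
def e3 (τ : ℂ) (n : ℤ) : ℂ := cexp ((Real.pi:ℂ) * I * τ * (n:ℂ) ^ 2)
def e4 (τ : ℂ) (n : ℤ) : ℂ := cexp ((Real.pi:ℂ) * I * τ * (n:ℂ) ^ 2 + (Real.pi:ℂ) * I * (n:ℂ))
def e5 (τ : ℂ) (n : ℤ) : ℂ := cexp ((Real.pi:ℂ) * I * τ * ((n:ℂ) + 1/2) ^ 2 + (Real.pi:ℂ) * I * (n:ℂ))
def eD (τ : ℂ) (n : ℤ) : ℂ := (2*(n:ℂ)+1) * e5 τ n
def e6 (τ : ℂ) (n : ℤ) : ℂ := 2*(n:ℂ) * e4 τ n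
def e7 (τ : ℂ) (n : ℤ) : ℂ := cexp ((Real.pi:ℂ) * I * τ * ((n:ℂ) + 1) ^ 2)
def e8 (τ : ℂ) (n : ℤ) : ℂ := cexp ((Real.pi:ℂ) * I * τ * ((n:ℂ) + 1) ^ 2 + (Real.pi:ℂ) * I * (n:ℂ))
def e9 (τ : ℂ) (n : ℤ) : ℂ := (2*(n:ℂ)+2) * e8 τ n

def T2 (τ : ℂ) : ℂ := ∑' n : ℤ, e2 τ n
def T3 (τ : ℂ) : ℂ := ∑' n : ℤ, e3 τ n
def T4 (τ : ℂ) : ℂ := ∑' n : ℤ, e4 τ n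
def TD (τ : ℂ) : ℂ := ∑' n : ℤ, eD τ n

lemma one_le_w (n : ℤ) : ‖(1:ℂ)‖ ≤ 2 * |(n:ℝ)| + 3 := by
  simp; linarith [abs_nonneg ((n:ℝ))]

lemma coeff_le_w (u v : ℝ) (hu : |u| ≤ 2) (hv : |v| ≤ 3) (n : ℤ) :
    ‖((u*(n:ℝ)+v : ℝ):ℂ)‖ ≤ 2 * |(n:ℝ)| + 3 := by
  rw [Complex.norm_real, Real.norm_eq_abs]
  have h1 : |u*(n:ℝ)+v| ≤ |u| * |(n:ℝ)| + |v| := by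
    refine (abs_add_le _ _).trans ?_
    rw [abs_mul]
  have := abs_nonneg ((n:ℝ))
  nlinarith

lemma nb1 (n : ℤ) : ‖(2*(n:ℂ)+1)‖ ≤ 2 * |(n:ℝ)| + 3 := by
  have h : (2*(n:ℂ)+1) = ((2*(n:ℝ)+1 : ℝ):ℂ) := by push_cast; ring
  rw [h]; exact coeff_le_w 2 1 (by norm_num) (by norm_num) n

lemma nb2 (n : ℤ) : ‖(2*(n:ℂ))‖ ≤ 2 * |(n:ℝ)| + 3 := by
  have h : (2*(n:ℂ)) = ((2*(n:ℝ)+0 : ℝ):ℂ) := by push_cast; ring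
  rw [h]; exact coeff_le_w 2 0 (by norm_num) (by norm_num) n

lemma nb3 (n : ℤ) : ‖(2*(n:ℂ)+2)‖ ≤ 2 * |(n:ℝ)| + 3 := by
  have h : (2*(n:ℂ)+2) = ((2*(n:ℝ)+2 : ℝ):ℂ) := by push_cast; ring
  rw [h]; exact coeff_le_w 2 2 (by norm_num) (by norm_num) n

lemma sum_e2 (τ : ℂ) (hτ : 0 < τ.im) : Summable fun n : ℤ => ‖e2 τ n‖ :=
  (sumnorm τ hτ (1/2) (fun _ => 1) (fun _ => 0) (fun n => (Real.pi:ℂ) * I * τ * ((n:ℂ) + 1/2) ^ 2)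
    (fun n => by push_cast; ring) one_le_w).congr
    (fun n => by rw [one_mul]; rfl)

lemma sum_e3 (τ : ℂ) (hτ : 0 < τ.im) : Summable fun n : ℤ => ‖e3 τ n‖ :=
  (sumnorm τ hτ 0 (fun _ => 1) (fun _ => 0) (fun n => (Real.pi:ℂ) * I * τ * (n:ℂ) ^ 2)
    (fun n => by push_cast; ring) one_le_w).congr
    (fun n => by rw [one_mul]; rfl)

lemma sum_e4 (τ : ℂ) (hτ : 0 < τ.im) : Summable fun n : ℤ => ‖e4 τ n‖ :=
  (sumnorm τ hτ 0 (fun _ => 1) (fun n => (n:ℝ)) (fun n => (Real.pi:ℂ) * I * τ * (n:ℂ) ^ 2 + (Real.pi:ℂ) * I * (n:ℂ))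
    (fun n => by push_cast; ring) one_le_w).congr
    (fun n => by rw [one_mul]; rfl)

lemma sum_e5 (τ : ℂ) (hτ : 0 < τ.im) : Summable fun n : ℤ => ‖e5 τ n‖ :=
  (sumnorm τ hτ (1/2) (fun _ => 1) (fun n => (n:ℝ)) (fun n => (Real.pi:ℂ) * I * τ * ((n:ℂ) + 1/2) ^ 2 + (Real.pi:ℂ) * I * (n:ℂ))
    (fun n => by push_cast; ring) one_le_w).congr
    (fun n => by rw [one_mul]; rfl)

lemma sum_eD (τ : ℂ) (hτ : 0 < τ.im) : Summable fun n : ℤ => ‖eD τ n‖ :=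
  (sumnorm τ hτ (1/2) (fun n => 2*(n:ℂ)+1) (fun n => (n:ℝ)) (fun n => (Real.pi:ℂ) * I * τ * ((n:ℂ) + 1/2) ^ 2 + (Real.pi:ℂ) * I * (n:ℂ))
    (fun n => by push_cast; ring) nb1).congr
    (fun n => rfl)

lemma sum_e6 (τ : ℂ) (hτ : 0 < τ.im) : Summable fun n : ℤ => ‖e6 τ n‖ :=
  (sumnorm τ hτ 0 (fun n => 2*(n:ℂ)) (fun n => (n:ℝ)) (fun n => (Real.pi:ℂ) * I * τ * (n:ℂ) ^ 2 + (Real.pi:ℂ) * I * (n:ℂ))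
    (fun n => by push_cast; ring) nb2).congr
    (fun n => rfl)

lemma sum_e7 (τ : ℂ) (hτ : 0 < τ.im) : Summable fun n : ℤ => ‖e7 τ n‖ :=
  (sumnorm τ hτ 1 (fun _ => 1) (fun _ => 0) (fun n => (Real.pi:ℂ) * I * τ * ((n:ℂ) + 1) ^ 2)
    (fun n => by push_cast; ring) one_le_w).congr
    (fun n => by rw [one_mul]; rfl)

lemma sum_e8 (τ : ℂ) (hτ : 0 < τ.im) : Summable fun n : ℤ => ‖e8 τ n‖ :=
  (sumnorm τ hτ 1 (fun _ => 1) (fun n => (n:ℝ)) (fun n => (Real.pi:ℂ) * I * τ * ((n:ℂ) + 1) ^ 2 + (Real.pi:ℂ) * I * (n:ℂ))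
    (fun n => by push_cast; ring) one_le_w).congr
    (fun n => by rw [one_mul]; rfl)

lemma sum_e9 (τ : ℂ) (hτ : 0 < τ.im) : Summable fun n : ℤ => ‖e9 τ n‖ :=
  (sumnorm τ hτ 1 (fun n => 2*(n:ℂ)+2) (fun n => (n:ℝ)) (fun n => (Real.pi:ℂ) * I * τ * ((n:ℂ) + 1) ^ 2 + (Real.pi:ℂ) * I * (n:ℂ))
    (fun n => by push_cast; ring) nb3).congr
    (fun n => rfl)

lemma im_two_mul (τ : ℂ) (hτ : 0 < τ.im) : 0 < (2*τ).im := by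
  have : (2*τ).im = 2*τ.im := by
    simp [Complex.mul_im]
  rw [this]; linarith


/-! ### Doubling identities -/

lemma J2 (τ : ℂ) (hτ : 0 < τ.im) : T3 τ * T4 τ = T4 (2*τ) * T4 (2*τ) := by
  have h2 := im_two_mul τ hτ
  rw [T3, T4, tsum_mul_tsum_of_summable_norm (sum_e3 τ hτ) (sum_e4 τ hτ)]
  rw [tsum_split _ (summable_mul_of_summable_norm (sum_e3 τ hτ) (sum_e4 τ hτ))]
  have heven : (∑' p : ℤ × ℤ, e3 τ (p.1 + p.2) * e4 τ (p.1 - p.2))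
      = T4 (2*τ) * T4 (2*τ) := by
    rw [T4, tsum_mul_tsum_of_summable_norm (sum_e4 _ h2) (sum_e4 _ h2)]
    refine tsum_congr (fun p => ?_)
    obtain ⟨m, n⟩ := p
    show e3 τ (m + n) * e4 τ (m - n) = e4 (2*τ) m * e4 (2*τ) n
    simp only [e3, e4]
    rw [← Complex.exp_add, ← Complex.exp_add]
    exact exp_eq _ _ (-n) (by push_cast; ring)
  have hodd : (∑' p : ℤ × ℤ, e3 τ (p.1 + p.2 + 1) * e4 τ (p.1 - p.2)) = 0 := by
    apply tsum_prod_zero_of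
    rintro ⟨m, n⟩
    show e3 τ (m + (-n-1) + 1) * e4 τ (m - (-n-1)) = -(e3 τ (m + n + 1) * e4 τ (m - n))
    simp only [e3, e4]
    rw [← Complex.exp_add, ← Complex.exp_add]
    exact exp_eq_neg _ _ n (by push_cast; ring)
  rw [heven, hodd, add_zero]

lemma J3 (τ : ℂ) (hτ : 0 < τ.im) : T2 τ * T2 τ = 2 * (T2 (2*τ) * T3 (2*τ)) := by
  have h2 := im_two_mul τ hτ
  rw [T2, tsum_mul_tsum_of_summable_norm (sum_e2 τ hτ) (sum_e2 τ hτ)]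
  rw [tsum_split _ (summable_mul_of_summable_norm (sum_e2 τ hτ) (sum_e2 τ hτ))]
  have heven : (∑' p : ℤ × ℤ, e2 τ (p.1 + p.2) * e2 τ (p.1 - p.2))
      = T2 (2*τ) * T3 (2*τ) := by
    rw [T2, T3, tsum_mul_tsum_of_summable_norm (sum_e2 _ h2) (sum_e3 _ h2)]
    refine tsum_congr (fun p => ?_)
    obtain ⟨m, n⟩ := p
    show e2 τ (m + n) * e2 τ (m - n) = e2 (2*τ) m * e3 (2*τ) n
    simp only [e2, e3]
    rw [← Complex.exp_add, ← Complex.exp_add]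
    exact exp_eq _ _ 0 (by push_cast; ring)
  have hodd : (∑' p : ℤ × ℤ, e2 τ (p.1 + p.2 + 1) * e2 τ (p.1 - p.2))
      = T3 (2*τ) * T2 (2*τ) := by
    have hstep : (∑' p : ℤ × ℤ, e2 τ (p.1 + p.2 + 1) * e2 τ (p.1 - p.2))
        = ∑' p : ℤ × ℤ, e7 (2*τ) p.1 * e2 (2*τ) p.2 := by
      refine tsum_congr (fun p => ?_)
      obtain ⟨m, n⟩ := p
      show e2 τ (m + n + 1) * e2 τ (m - n) = e7 (2*τ) m * e2 (2*τ) n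
      simp only [e2, e7]
      rw [← Complex.exp_add, ← Complex.exp_add]
      exact exp_eq _ _ 0 (by push_cast; ring)
    rw [hstep, ← tsum_mul_tsum_of_summable_norm (sum_e7 _ h2) (sum_e2 _ h2)]
    congr 1
    · -- ∑' e7 σ = T3 σ
      rw [T3, ← (Equiv.addRight (1:ℤ)).tsum_eq (e3 (2*τ))]
      refine tsum_congr (fun m => ?_)
      show e7 (2*τ) m = e3 (2*τ) (m + 1)
      simp only [e3, e7]
      exact exp_eq _ _ 0 (by push_cast; ring)
  rw [heven, hodd]
  ring

lemma sum_e6_eq_zero (σ : ℂ) : ∑' n : ℤ, e6 σ n = 0 := by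
  apply tsum_zero_of_odd
  intro n
  simp only [e6, e4]
  have h := exp_eq ((Real.pi:ℂ) * I * σ * ((-n:ℤ):ℂ) ^ 2 + (Real.pi:ℂ) * I * ((-n:ℤ):ℂ))
    ((Real.pi:ℂ) * I * σ * (n:ℂ) ^ 2 + (Real.pi:ℂ) * I * (n:ℂ)) (-n) (by push_cast; ring)
  push_cast at h ⊢
  rw [h]
  try ring

lemma J1 (τ : ℂ) (hτ : 0 < τ.im) : TD τ * T2 τ = 2 * (TD (2*τ) * T4 (2*τ)) := by
  have h2 := im_two_mul τ hτ
  rw [TD, T2, tsum_mul_tsum_of_summable_norm (sum_eD τ hτ) (sum_e2 τ hτ)]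
  rw [tsum_split _ (summable_mul_of_summable_norm (sum_eD τ hτ) (sum_e2 τ hτ))]
  have heven : (∑' p : ℤ × ℤ, eD τ (p.1 + p.2) * e2 τ (p.1 - p.2))
      = TD (2*τ) * T4 (2*τ) := by
    have hterm : ∀ p : ℤ × ℤ, eD τ (p.1 + p.2) * e2 τ (p.1 - p.2)
        = eD (2*τ) p.1 * e4 (2*τ) p.2 + e5 (2*τ) p.1 * e6 (2*τ) p.2 := by
      rintro ⟨m, n⟩
      show eD τ (m + n) * e2 τ (m - n)
        = eD (2*τ) m * e4 (2*τ) n + e5 (2*τ) m * e6 (2*τ) n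
      simp only [eD, e2, e4, e5, e6]
      have h0 : cexp ((Real.pi:ℂ) * I * τ * (((m+n:ℤ):ℂ) + 1/2) ^ 2 + (Real.pi:ℂ) * I * ((m+n:ℤ):ℂ))
            * cexp ((Real.pi:ℂ) * I * τ * (((m-n:ℤ):ℂ) + 1/2) ^ 2)
          = cexp ((Real.pi:ℂ) * I * (2*τ) * ((m:ℂ) + 1/2) ^ 2 + (Real.pi:ℂ) * I * (m:ℂ))
            * cexp ((Real.pi:ℂ) * I * (2*τ) * (n:ℂ) ^ 2 + (Real.pi:ℂ) * I * (n:ℂ)) := by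
        rw [← Complex.exp_add, ← Complex.exp_add]
        exact exp_eq _ _ 0 (by push_cast; ring)
      push_cast at h0 ⊢
      linear_combination (2*(m:ℂ) + 2*(n:ℂ) + 1) * h0
    rw [tsum_congr hterm, Summable.tsum_add
      (summable_mul_of_summable_norm (sum_eD _ h2) (sum_e4 _ h2))
      (summable_mul_of_summable_norm (sum_e5 _ h2) (sum_e6 _ h2))]
    rw [← tsum_mul_tsum_of_summable_norm (sum_eD _ h2) (sum_e4 _ h2),
      ← tsum_mul_tsum_of_summable_norm (sum_e5 _ h2) (sum_e6 _ h2),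
      sum_e6_eq_zero, mul_zero, add_zero]
    rfl
  have hodd : (∑' p : ℤ × ℤ, eD τ (p.1 + p.2 + 1) * e2 τ (p.1 - p.2))
      = TD (2*τ) * T4 (2*τ) := by
    have hterm : ∀ p : ℤ × ℤ, eD τ (p.1 + p.2 + 1) * e2 τ (p.1 - p.2)
        = -(e8 (2*τ) p.1 * eD (2*τ) p.2) + -(e9 (2*τ) p.1 * e5 (2*τ) p.2) := by
      rintro ⟨m, n⟩
      show eD τ (m + n + 1) * e2 τ (m - n)
        = -(e8 (2*τ) m * eD (2*τ) n) + -(e9 (2*τ) m * e5 (2*τ) n)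
      simp only [eD, e2, e5, e8, e9]
      have h0 : cexp ((Real.pi:ℂ) * I * τ * (((m+n+1:ℤ):ℂ) + 1/2) ^ 2 + (Real.pi:ℂ) * I * ((m+n+1:ℤ):ℂ))
            * cexp ((Real.pi:ℂ) * I * τ * (((m-n:ℤ):ℂ) + 1/2) ^ 2)
          = - (cexp ((Real.pi:ℂ) * I * (2*τ) * ((m:ℂ) + 1) ^ 2 + (Real.pi:ℂ) * I * (m:ℂ))
            * cexp ((Real.pi:ℂ) * I * (2*τ) * ((n:ℂ) + 1/2) ^ 2 + (Real.pi:ℂ) * I * (n:ℂ))) := by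
        rw [← Complex.exp_add, ← Complex.exp_add]
        exact exp_eq_neg _ _ 0 (by push_cast; ring)
      push_cast at h0 ⊢
      linear_combination (2*(m:ℂ) + 2*(n:ℂ) + 3) * h0
    rw [tsum_congr hterm, Summable.tsum_add
      ((summable_mul_of_summable_norm (sum_e8 _ h2) (sum_eD _ h2)).neg)
      ((summable_mul_of_summable_norm (sum_e9 _ h2) (sum_e5 _ h2)).neg)]
    rw [tsum_neg, tsum_neg,
      ← tsum_mul_tsum_of_summable_norm (sum_e8 _ h2) (sum_eD _ h2),
      ← tsum_mul_tsum_of_summable_norm (sum_e9 _ h2) (sum_e5 _ h2)]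
    have he8 : ∑' n : ℤ, e8 (2*τ) n = - T4 (2*τ) := by
      rw [T4, ← (Equiv.addRight (1:ℤ)).tsum_eq (e4 (2*τ)), ← tsum_neg]
      refine tsum_congr (fun m => ?_)
      show e8 (2*τ) m = - e4 (2*τ) (m + 1)
      simp only [e4, e8]
      exact exp_eq_neg _ _ (-1) (by push_cast; ring)
    have he9 : ∑' n : ℤ, e9 (2*τ) n = 0 := by
      have hterm9 : ∀ m : ℤ, e9 (2*τ) m = - e6 (2*τ) (m + 1) := by
        intro m
        simp only [e9, e8, e6, e4]
        have h := exp_eq_neg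
          ((Real.pi:ℂ) * I * (2*τ) * ((m:ℂ) + 1) ^ 2 + (Real.pi:ℂ) * I * (m:ℂ))
          ((Real.pi:ℂ) * I * (2*τ) * (((m+1:ℤ)):ℂ) ^ 2 + (Real.pi:ℂ) * I * ((m+1:ℤ):ℂ))
          (-1) (by push_cast; ring)
        push_cast at h ⊢
        rw [h]
        ring
      have hre : ∑' m : ℤ, e6 (2*τ) (m+1) = ∑' m : ℤ, e6 (2*τ) m :=
        (Equiv.addRight (1:ℤ)).tsum_eq (e6 (2*τ))
      calc ∑' m : ℤ, e9 (2*τ) m = ∑' m : ℤ, -(e6 (2*τ) (m+1)) := tsum_congr hterm9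
        _ = - ∑' m : ℤ, e6 (2*τ) (m+1) := tsum_neg
        _ = 0 := by rw [hre, sum_e6_eq_zero, neg_zero]
    rw [he8, he9, zero_mul, neg_zero, add_zero]
    rw [← TD]
    ring
  rw [heven, hodd]
  ring


/-! ### Estimates for `im τ ≥ 1` -/

lemma norm_tsum_le_geom (g : ℕ → ℂ) (M r : ℝ) (hr0 : 0 ≤ r) (hr1 : r < 1) (hM : 0 ≤ M)
    (h : ∀ n, ‖g n‖ ≤ M * r ^ n) : ‖∑' n, g n‖ ≤ M * (1 - r)⁻¹ := by
  have hgeo : Summable fun n : ℕ => M * r ^ n :=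
    (summable_geometric_of_lt_one hr0 hr1).mul_left M
  have hs : Summable fun n => ‖g n‖ :=
    Summable.of_nonneg_of_le (fun n => norm_nonneg _) h hgeo
  calc ‖∑' n, g n‖ ≤ ∑' n, ‖g n‖ := norm_tsum_le_tsum_norm hs
    _ ≤ ∑' n : ℕ, M * r ^ n := Summable.tsum_le_tsum h hs hgeo
    _ = M * (1 - r)⁻¹ := by rw [tsum_mul_left, tsum_geometric_of_lt_one hr0 hr1]

lemma exp_pi_ge : (4:ℝ) ≤ rexp Real.pi := by
  have h1 := Real.add_one_le_exp Real.pi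
  have h2 := Real.pi_gt_three
  linarith

lemma exp_neg_pi_le : rexp (-Real.pi) ≤ 1/4 := by
  rw [Real.exp_neg]
  rw [inv_le_comm₀ (Real.exp_pos _) (by norm_num)]
  calc (1/4:ℝ)⁻¹ = 4 := by norm_num
    _ ≤ rexp Real.pi := exp_pi_ge

lemma exp_neg_two_pi_le : rexp (-(2*Real.pi)) ≤ 1/16 := by
  have h : rexp (-(2*Real.pi)) = rexp (-Real.pi) * rexp (-Real.pi) := by
    rw [← Real.exp_add]; ring_nf
  rw [h]
  have h0 := Real.exp_nonneg (-Real.pi)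
  have := exp_neg_pi_le
  nlinarith

lemma norm_e4 (τ : ℂ) (k : ℤ) : ‖e4 τ k‖ = rexp (-Real.pi * τ.im * ((k:ℝ))^2) := by
  rw [e4, ← one_mul (cexp _), norm_term_eq τ 1 ((k:ℝ)^2) (k:ℝ) _ (by push_cast; ring),
    norm_one, one_mul]

lemma norm_e2 (τ : ℂ) (k : ℤ) : ‖e2 τ k‖ = rexp (-Real.pi * τ.im * ((k:ℝ)+1/2)^2) := by
  rw [e2, ← one_mul (cexp _), norm_term_eq τ 1 (((k:ℝ)+1/2)^2) 0 _ (by push_cast; ring),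
    norm_one, one_mul]

lemma norm_e5 (τ : ℂ) (k : ℤ) : ‖e5 τ k‖ = rexp (-Real.pi * τ.im * ((k:ℝ)+1/2)^2) := by
  rw [e5, ← one_mul (cexp _), norm_term_eq τ 1 (((k:ℝ)+1/2)^2) (k:ℝ) _ (by push_cast; ring),
    norm_one, one_mul]

lemma exp_quad_le (t : ℝ) (ht : 1 ≤ t) (n : ℕ) :
    rexp (-Real.pi * t * ((n:ℝ)+1)^2) ≤ (1/4 : ℝ) ^ (n+1) := by
  have h1 : rexp (-Real.pi * t * ((n:ℝ)+1)^2) ≤ rexp (-Real.pi * ((n:ℝ)+1)) := by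
    apply Real.exp_le_exp.mpr
    have hn : (1:ℝ) ≤ (n:ℝ)+1 := by
      have := Nat.cast_nonneg (α := ℝ) n
      linarith
    have h2 : ((n:ℝ)+1) ≤ t*((n:ℝ)+1)^2 := by nlinarith
    have h3 := mul_le_mul_of_nonneg_left h2 Real.pi_pos.le
    linarith
  have h2 : rexp (-Real.pi * ((n:ℝ)+1)) = rexp (-Real.pi) ^ (n+1) := by
    rw [← Real.exp_nat_mul]
    congr 1
    push_cast; ring
  calc rexp (-Real.pi * t * ((n:ℝ)+1)^2) ≤ rexp (-Real.pi) ^ (n+1) := by rw [← h2]; exact h1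
    _ ≤ (1/4:ℝ) ^ (n+1) := pow_le_pow_left₀ (Real.exp_nonneg _) exp_neg_pi_le _

/-- `T4 τ ≠ 0` for `1 ≤ im τ` -/
lemma T4_est (τ : ℂ) (hτ : 1 ≤ τ.im) : T4 τ ≠ 0 := by
  have him : 0 < τ.im := lt_of_lt_of_le one_pos hτ
  have sf : Summable (e4 τ) := (sum_e4 τ him).of_norm
  have sg : Summable (fun n : ℕ => e4 τ (n:ℤ) + e4 τ (-((n:ℤ)+1))) := sf.nat_add_neg_add_one
  have key : T4 τ = 1 + e4 τ (-1)
      + ∑' b : ℕ, (e4 τ (((b+1:ℕ):ℤ)) + e4 τ (-(((b+1:ℕ):ℤ)+1))) := by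
    rw [T4, ← tsum_nat_add_neg_add_one sf, Summable.tsum_eq_zero_add sg]
    have h1 : e4 τ ((0:ℕ):ℤ) = 1 := by simp [e4]
    have h2 : (-(((0:ℕ):ℤ)+1)) = (-1 : ℤ) := by norm_num
    rw [h1, h2]
  have hb1 : ‖e4 τ (-1)‖ ≤ 1/4 := by
    rw [norm_e4]
    have h1 : rexp (-Real.pi * τ.im * (((-1:ℤ):ℝ))^2) ≤ rexp (-Real.pi) := by
      apply Real.exp_le_exp.mpr
      push_cast
      nlinarith [Real.pi_pos]
    exact h1.trans exp_neg_pi_le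
  have hb2 : ‖∑' b : ℕ, (e4 τ (((b+1:ℕ):ℤ)) + e4 τ (-(((b+1:ℕ):ℤ)+1)))‖
      ≤ (1/2) * (1 - 1/4)⁻¹ := by
    apply norm_tsum_le_geom _ _ _ (by norm_num) (by norm_num) (by norm_num)
    intro n
    have e1 : ‖e4 τ (((n+1:ℕ):ℤ))‖ ≤ (1/4:ℝ)^(n+1) := by
      rw [norm_e4]
      have hc : ((((n+1:ℕ):ℤ)):ℝ) = (n:ℝ)+1 := by push_cast; ring
      rw [hc]
      exact exp_quad_le τ.im hτ n
    have e2' : ‖e4 τ (-(((n+1:ℕ):ℤ)+1))‖ ≤ (1/4:ℝ)^(n+1) := by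
      rw [norm_e4]
      have hc : (((-(((n+1:ℕ):ℤ)+1)):ℤ):ℝ) = -((n:ℝ)+2) := by push_cast; ring
      rw [hc]
      refine le_trans ?_ (exp_quad_le τ.im hτ n)
      apply Real.exp_le_exp.mpr
      have hn : (0:ℝ) ≤ (n:ℝ) := Nat.cast_nonneg n
      have hq : ((n:ℝ)+1)^2 ≤ (-((n:ℝ)+2))^2 := by nlinarith
      have h3 := mul_le_mul_of_nonneg_left hq (mul_pos Real.pi_pos him).le
      nlinarith
    calc ‖e4 τ (((n+1:ℕ):ℤ)) + e4 τ (-(((n+1:ℕ):ℤ)+1))‖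
        ≤ ‖e4 τ (((n+1:ℕ):ℤ))‖ + ‖e4 τ (-(((n+1:ℕ):ℤ)+1))‖ := norm_add_le _ _
      _ ≤ (1/4:ℝ)^(n+1) + (1/4:ℝ)^(n+1) := add_le_add e1 e2'
      _ = (1/2) * (1/4)^n := by ring
  intro h0
  rw [h0] at key
  have hone : (1:ℂ) = -(e4 τ (-1)
      + ∑' b : ℕ, (e4 τ (((b+1:ℕ):ℤ)) + e4 τ (-(((b+1:ℕ):ℤ)+1)))) := by
    linear_combination -key
  have hn := congrArg norm hone
  rw [norm_neg, norm_one] at hn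
  have hfin : (1:ℝ) ≤ 1/4 + (1/2) * (1 - 1/4)⁻¹ := by
    calc (1:ℝ) = ‖e4 τ (-1)
        + ∑' b : ℕ, (e4 τ (((b+1:ℕ):ℤ)) + e4 τ (-(((b+1:ℕ):ℤ)+1)))‖ := hn
      _ ≤ ‖e4 τ (-1)‖
        + ‖∑' b : ℕ, (e4 τ (((b+1:ℕ):ℤ)) + e4 τ (-(((b+1:ℕ):ℤ)+1)))‖ := norm_add_le _ _
      _ ≤ 1/4 + (1/2) * (1 - 1/4)⁻¹ := add_le_add hb1 hb2
  norm_num at hfin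


lemma exp_neg_two_pi_pow (t : ℝ) (ht : 1 ≤ t) (n : ℕ) :
    rexp (-Real.pi * t * (((n:ℝ)+1)*((n:ℝ)+2))) ≤ (1/16:ℝ)^(n+1) := by
  have h1 : rexp (-Real.pi * t * (((n:ℝ)+1)*((n:ℝ)+2))) ≤ rexp (-(2*Real.pi) * ((n:ℝ)+1)) := by
    apply Real.exp_le_exp.mpr
    have hn : (0:ℝ) ≤ (n:ℝ) := Nat.cast_nonneg n
    have ha : 2*((n:ℝ)+1) ≤ ((n:ℝ)+1)*((n:ℝ)+2) := by nlinarith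
    have hbb : ((n:ℝ)+1)*((n:ℝ)+2) ≤ t*(((n:ℝ)+1)*((n:ℝ)+2)) := by nlinarith
    have h2 : 2*((n:ℝ)+1) ≤ t*(((n:ℝ)+1)*((n:ℝ)+2)) := ha.trans hbb
    have h3 := mul_le_mul_of_nonneg_left h2 Real.pi_pos.le
    linarith
  have h2 : rexp (-(2*Real.pi) * ((n:ℝ)+1)) = rexp (-(2*Real.pi)) ^ (n+1) := by
    rw [← Real.exp_nat_mul]
    congr 1
    push_cast; ring
  calc rexp (-Real.pi * t * (((n:ℝ)+1)*((n:ℝ)+2)))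
      ≤ rexp (-(2*Real.pi)) ^ (n+1) := by rw [← h2]; exact h1
    _ ≤ (1/16:ℝ) ^ (n+1) := pow_le_pow_left₀ (Real.exp_nonneg _) exp_neg_two_pi_le _

lemma norm_e2_succ (τ : ℂ) (hτ : 1 ≤ τ.im) (b : ℕ) :
    ‖e2 τ (((b+1:ℕ):ℤ))‖ ≤ rexp (-Real.pi * τ.im * (1/2)^2) * (1/16:ℝ)^(b+1) := by
  rw [norm_e2]
  have hfac : rexp (-Real.pi * τ.im * (((((b+1:ℕ):ℤ)):ℝ)+1/2)^2)
      = rexp (-Real.pi * τ.im * (1/2)^2)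
        * rexp (-Real.pi * τ.im * (((b:ℝ)+1)*((b:ℝ)+2))) := by
    rw [← Real.exp_add]
    congr 1
    push_cast; ring
  rw [hfac]
  exact mul_le_mul_of_nonneg_left (exp_neg_two_pi_pow τ.im hτ b) (Real.exp_nonneg _)

lemma T2_est (τ : ℂ) (hτ : 1 ≤ τ.im) : T2 τ ≠ 0 := by
  have him : 0 < τ.im := lt_of_lt_of_le one_pos hτ
  have sf : Summable (e2 τ) := (sum_e2 τ him).of_norm
  have sg : Summable (fun n : ℕ => e2 τ (n:ℤ) + e2 τ (-((n:ℤ)+1))) := sf.nat_add_neg_add_one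
  have hpair : ∀ n : ℕ, e2 τ (-(((n:ℕ):ℤ)+1)) = e2 τ ((n:ℕ):ℤ) := by
    intro n
    simp only [e2]
    exact exp_eq _ _ 0 (by push_cast; ring)
  have sg2 : Summable (fun n : ℕ => e2 τ (n:ℤ) + e2 τ (n:ℤ)) :=
    sg.congr (fun n => by rw [hpair n])
  have key : T2 τ = (e2 τ ((0:ℕ):ℤ) + e2 τ ((0:ℕ):ℤ))
      + ∑' b : ℕ, (e2 τ (((b+1:ℕ):ℤ)) + e2 τ (((b+1:ℕ):ℤ))) := by
    have h1 : ∑' n : ℕ, (e2 τ (n:ℤ) + e2 τ (-((n:ℤ)+1)))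
        = ∑' n : ℕ, (e2 τ (n:ℤ) + e2 τ (n:ℤ)) := tsum_congr (fun n => by rw [hpair n])
    rw [T2, ← tsum_nat_add_neg_add_one sf, h1, Summable.tsum_eq_zero_add sg2]
  set w : ℝ := rexp (-Real.pi * τ.im * (1/2)^2) with hw
  have hw0 : 0 < w := Real.exp_pos _
  have hnw : ‖e2 τ ((0:ℕ):ℤ)‖ = w := by
    rw [norm_e2]
    congr 1
    push_cast; ring
  have hb2 : ‖∑' b : ℕ, (e2 τ (((b+1:ℕ):ℤ)) + e2 τ (((b+1:ℕ):ℤ)))‖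
      ≤ (2*w/16) * (1 - 1/16)⁻¹ := by
    apply norm_tsum_le_geom _ _ _ (by norm_num) (by norm_num) (by positivity)
    intro n
    have h1 := norm_e2_succ τ hτ n
    calc ‖e2 τ (((n+1:ℕ):ℤ)) + e2 τ (((n+1:ℕ):ℤ))‖
        ≤ ‖e2 τ (((n+1:ℕ):ℤ))‖ + ‖e2 τ (((n+1:ℕ):ℤ))‖ := norm_add_le _ _
      _ ≤ w * (1/16:ℝ)^(n+1) + w * (1/16:ℝ)^(n+1) := add_le_add h1 h1
      _ = (2*w/16) * (1/16)^n := by ring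
  intro h0
  rw [h0] at key
  have hone : e2 τ ((0:ℕ):ℤ) + e2 τ ((0:ℕ):ℤ)
      = -(∑' b : ℕ, (e2 τ (((b+1:ℕ):ℤ)) + e2 τ (((b+1:ℕ):ℤ)))) := by
    linear_combination -key
  have hn := congrArg norm hone
  rw [norm_neg] at hn
  have h2w : 2*w ≤ ‖e2 τ ((0:ℕ):ℤ) + e2 τ ((0:ℕ):ℤ)‖ := by
    have : e2 τ ((0:ℕ):ℤ) + e2 τ ((0:ℕ):ℤ) = 2 * e2 τ ((0:ℕ):ℤ) := by ring
    rw [this, norm_mul, hnw]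
    norm_num
  rw [hn] at h2w
  have := h2w.trans hb2
  nlinarith

lemma two_mul_le_pow (b : ℕ) : (2*(b:ℝ)+3) ≤ 3*2^b := by
  induction b with
  | zero => norm_num
  | succ n ih =>
    have h2 : (1:ℝ) ≤ 2^n := one_le_pow₀ (by norm_num)
    push_cast
    push_cast at ih
    calc 2*((n:ℝ)+1)+3 = (2*(n:ℝ)+3) + 2 := by ring
      _ ≤ 3*2^n + 3*2^n := by linarith
      _ = 3*2^(n+1) := by ring

lemma TD_est (τ : ℂ) (hτ : 1 ≤ τ.im) : TD τ ≠ 0 := by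
  have him : 0 < τ.im := lt_of_lt_of_le one_pos hτ
  have sf : Summable (eD τ) := (sum_eD τ him).of_norm
  have sg : Summable (fun n : ℕ => eD τ (n:ℤ) + eD τ (-((n:ℤ)+1))) := sf.nat_add_neg_add_one
  have h5 : ∀ n : ℕ, e5 τ (-(((n:ℕ):ℤ)+1)) = - e5 τ ((n:ℕ):ℤ) := by
    intro n
    simp only [e5]
    exact exp_eq_neg _ _ (-((n:ℤ)+1)) (by push_cast; ring)
  have hpair : ∀ n : ℕ, eD τ (-(((n:ℕ):ℤ)+1)) = eD τ ((n:ℕ):ℤ) := by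
    intro n
    simp only [eD]
    rw [h5 n]
    push_cast
    ring
  have sg2 : Summable (fun n : ℕ => eD τ (n:ℤ) + eD τ (n:ℤ)) :=
    sg.congr (fun n => by rw [hpair n])
  have key : TD τ = (eD τ ((0:ℕ):ℤ) + eD τ ((0:ℕ):ℤ))
      + ∑' b : ℕ, (eD τ (((b+1:ℕ):ℤ)) + eD τ (((b+1:ℕ):ℤ))) := by
    have h1 : ∑' n : ℕ, (eD τ (n:ℤ) + eD τ (-((n:ℤ)+1)))
        = ∑' n : ℕ, (eD τ (n:ℤ) + eD τ (n:ℤ)) := tsum_congr (fun n => by rw [hpair n])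
    rw [TD, ← tsum_nat_add_neg_add_one sf, h1, Summable.tsum_eq_zero_add sg2]
  set w : ℝ := rexp (-Real.pi * τ.im * (1/2)^2) with hw
  have hw0 : 0 < w := Real.exp_pos _
  have hnw : ‖eD τ ((0:ℕ):ℤ)‖ = w := by
    simp only [eD]
    rw [norm_mul, norm_e5]
    have h1 : ‖(2*(((0:ℕ):ℤ):ℂ)+1)‖ = 1 := by norm_num
    rw [h1, one_mul]
    congr 1
    push_cast; ring
  have hbD : ∀ n : ℕ, ‖eD τ (((n+1:ℕ):ℤ))‖ ≤ (3*w/16) * (1/8:ℝ)^n := by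
    intro n
    simp only [eD]
    rw [norm_mul, norm_e5]
    have hco : ‖(2*((((n+1:ℕ):ℤ)):ℂ)+1)‖ = 2*(n:ℝ)+3 := by
      have h1 : (2*((((n+1:ℕ):ℤ)):ℂ)+1) = ((2*(n:ℝ)+3 : ℝ):ℂ) := by push_cast; ring
      rw [h1, Complex.norm_real, Real.norm_eq_abs, abs_of_pos (by positivity)]
    rw [hco]
    have hfac : rexp (-Real.pi * τ.im * (((((n+1:ℕ):ℤ)):ℝ)+1/2)^2)
        = w * rexp (-Real.pi * τ.im * (((n:ℝ)+1)*((n:ℝ)+2))) := by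
      rw [hw, ← Real.exp_add]
      congr 1
      push_cast; ring
    rw [hfac]
    calc (2*(n:ℝ)+3) * (w * rexp (-Real.pi * τ.im * (((n:ℝ)+1)*((n:ℝ)+2))))
        ≤ (3*2^n) * (w * (1/16:ℝ)^(n+1)) := by
          apply mul_le_mul (two_mul_le_pow n)
            (mul_le_mul_of_nonneg_left (exp_neg_two_pi_pow τ.im hτ n) hw0.le)
            (by positivity) (by positivity)
      _ = (3*w/16) * (1/8:ℝ)^n := by
          rw [pow_succ, show ((1:ℝ)/8) = (1/16)*2 by norm_num, mul_pow]
          ring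
  have hb2 : ‖∑' b : ℕ, (eD τ (((b+1:ℕ):ℤ)) + eD τ (((b+1:ℕ):ℤ)))‖
      ≤ (6*w/16) * (1 - 1/8)⁻¹ := by
    apply norm_tsum_le_geom _ _ _ (by norm_num) (by norm_num) (by positivity)
    intro n
    calc ‖eD τ (((n+1:ℕ):ℤ)) + eD τ (((n+1:ℕ):ℤ))‖
        ≤ ‖eD τ (((n+1:ℕ):ℤ))‖ + ‖eD τ (((n+1:ℕ):ℤ))‖ := norm_add_le _ _
      _ ≤ (3*w/16) * (1/8:ℝ)^n + (3*w/16) * (1/8:ℝ)^n := add_le_add (hbD n) (hbD n)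
      _ = (6*w/16) * (1/8)^n := by ring
  intro h0
  rw [h0] at key
  have hone : eD τ ((0:ℕ):ℤ) + eD τ ((0:ℕ):ℤ)
      = -(∑' b : ℕ, (eD τ (((b+1:ℕ):ℤ)) + eD τ (((b+1:ℕ):ℤ)))) := by
    linear_combination -key
  have hn := congrArg norm hone
  rw [norm_neg] at hn
  have h2w : 2*w ≤ ‖eD τ ((0:ℕ):ℤ) + eD τ ((0:ℕ):ℤ)‖ := by
    have h1 : eD τ ((0:ℕ):ℤ) + eD τ ((0:ℕ):ℤ) = 2 * eD τ ((0:ℕ):ℤ) := by ring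
    rw [h1, norm_mul, hnw]
    norm_num
  rw [hn] at h2w
  have := h2w.trans hb2
  nlinarith


/-! ### Nonvanishing on the upper half plane -/

lemma two_im (τ : ℂ) : (2*τ).im = 2*τ.im := by simp [Complex.mul_im]

lemma exists_pow_im (τ : ℂ) (hτ : 0 < τ.im) : ∃ k : ℕ, 1 ≤ 2^k * τ.im := by
  obtain ⟨k, hk⟩ := pow_unbounded_of_one_lt (τ.im⁻¹) (one_lt_two)
  refine ⟨k, ?_⟩
  have h1 : τ.im⁻¹ * τ.im = 1 := inv_mul_cancel₀ (ne_of_gt hτ)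
  have h2 := mul_le_mul_of_nonneg_right hk.le hτ.le
  rw [h1] at h2
  exact h2

lemma T4_ne_aux : ∀ (k : ℕ) (τ : ℂ), 0 < τ.im → 1 ≤ 2^k * τ.im → T4 τ ≠ 0 := by
  intro k
  induction k with
  | zero =>
    intro τ hτ hk
    exact T4_est τ (by simpa using hk)
  | succ k ih =>
    intro τ hτ hk
    have h2 := im_two_mul τ hτ
    have h4 : T4 (2*τ) ≠ 0 := by
      apply ih (2*τ) h2
      rw [two_im]
      have : (2:ℝ)^(k+1) * τ.im = 2^k * (2*τ.im) := by ring
      linarith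
    intro h0
    apply mul_ne_zero h4 h4
    rw [← J2 τ hτ, h0, mul_zero]

lemma T4_ne (τ : ℂ) (hτ : 0 < τ.im) : T4 τ ≠ 0 := by
  obtain ⟨k, hk⟩ := exists_pow_im τ hτ
  exact T4_ne_aux k τ hτ hk

lemma T3_ne (τ : ℂ) (hτ : 0 < τ.im) : T3 τ ≠ 0 := by
  have h2 := im_two_mul τ hτ
  have h := J2 τ hτ
  intro h0
  apply mul_ne_zero (T4_ne (2*τ) h2) (T4_ne (2*τ) h2)
  rw [← h, h0, zero_mul]

lemma T2_ne_aux : ∀ (k : ℕ) (τ : ℂ), 0 < τ.im → 1 ≤ 2^k * τ.im → T2 τ ≠ 0 := by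
  intro k
  induction k with
  | zero =>
    intro τ hτ hk
    exact T2_est τ (by simpa using hk)
  | succ k ih =>
    intro τ hτ hk
    have h2 := im_two_mul τ hτ
    have hT2 : T2 (2*τ) ≠ 0 := by
      apply ih (2*τ) h2
      rw [two_im]
      have : (2:ℝ)^(k+1) * τ.im = 2^k * (2*τ.im) := by ring
      linarith
    intro h0
    have hJ := J3 τ hτ
    rw [h0, mul_zero] at hJ
    have : T2 (2*τ) * T3 (2*τ) ≠ 0 := mul_ne_zero hT2 (T3_ne (2*τ) h2)
    apply this
    have h2ne : (2:ℂ) ≠ 0 := two_ne_zero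
    field_simp at hJ
    linear_combination -hJ / 2

lemma T2_ne (τ : ℂ) (hτ : 0 < τ.im) : T2 τ ≠ 0 := by
  obtain ⟨k, hk⟩ := exists_pow_im τ hτ
  exact T2_ne_aux k τ hτ hk

lemma TD_ne_aux : ∀ (k : ℕ) (τ : ℂ), 0 < τ.im → 1 ≤ 2^k * τ.im → TD τ ≠ 0 := by
  intro k
  induction k with
  | zero =>
    intro τ hτ hk
    exact TD_est τ (by simpa using hk)
  | succ k ih =>
    intro τ hτ hk
    have h2 := im_two_mul τ hτ
    have hTD : TD (2*τ) ≠ 0 := by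
      apply ih (2*τ) h2
      rw [two_im]
      have : (2:ℝ)^(k+1) * τ.im = 2^k * (2*τ.im) := by ring
      linarith
    intro h0
    have hJ := J1 τ hτ
    rw [h0, zero_mul] at hJ
    have hne : (2:ℂ) * (TD (2*τ) * T4 (2*τ)) ≠ 0 :=
      mul_ne_zero two_ne_zero (mul_ne_zero hTD (T4_ne (2*τ) h2))
    exact hne hJ.symm

lemma TD_ne (τ : ℂ) (hτ : 0 < τ.im) : TD τ ≠ 0 := by
  obtain ⟨k, hk⟩ := exists_pow_im τ hτ
  exact TD_ne_aux k τ hτ hk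



end NoEig

namespace NoEig

def tt (τ z : ℂ) (m : ℤ) : ℂ :=
  cexp ((Real.pi : ℂ) * I * ((m : ℂ) + 1 / 2) ^ 2 * τ +
    2 * (Real.pi : ℂ) * I * ((m : ℂ) + 1 / 2) * (z + 1 / 2))

lemma theta1_tt (τ z : ℂ) : theta1 τ z = -∑' m : ℤ, tt τ z m := rfl

lemma theta1_neg (τ z : ℂ) : theta1 τ (-z) = - theta1 τ z := by
  have hterm : ∀ m : ℤ, tt τ (-z) m = - tt τ z (-m-1) := by
    intro m
    simp only [tt]
    exact exp_eq_neg _ _ m (by push_cast; ring)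
  calc theta1 τ (-z) = -∑' m : ℤ, tt τ (-z) m := theta1_tt τ (-z)
    _ = -∑' m : ℤ, -(tt τ z (-m-1)) := by rw [tsum_congr hterm]
    _ = ∑' m : ℤ, tt τ z (-m-1) := by rw [tsum_neg, neg_neg]
    _ = ∑' m : ℤ, tt τ z m := negOne.tsum_eq (tt τ z)
    _ = - theta1 τ z := by rw [theta1_tt, neg_neg]

lemma theta1_zero (τ : ℂ) : theta1 τ 0 = 0 := by
  have := theta1_neg τ 0
  rw [neg_zero] at this
  linear_combination this / 2

lemma theta1_qper (τ z : ℂ) :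
    theta1 τ (z + τ) = -cexp (-(Real.pi:ℂ)*I*τ - 2*(Real.pi:ℂ)*I*z) * theta1 τ z := by
  have hterm : ∀ m : ℤ, tt τ (z+τ) m
      = -(cexp (-(Real.pi:ℂ)*I*τ - 2*(Real.pi:ℂ)*I*z) * tt τ z (m+1)) := by
    intro m
    simp only [tt]
    rw [← Complex.exp_add]
    exact exp_eq_neg _ _ (-1) (by push_cast; ring)
  calc theta1 τ (z + τ) = -∑' m : ℤ, tt τ (z+τ) m := theta1_tt τ (z+τ)
    _ = -∑' m : ℤ, -(cexp (-(Real.pi:ℂ)*I*τ - 2*(Real.pi:ℂ)*I*z) * tt τ z (m+1)) := by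
        rw [tsum_congr hterm]
    _ = ∑' m : ℤ, cexp (-(Real.pi:ℂ)*I*τ - 2*(Real.pi:ℂ)*I*z) * tt τ z (m+1) := by
        rw [tsum_neg, neg_neg]
    _ = cexp (-(Real.pi:ℂ)*I*τ - 2*(Real.pi:ℂ)*I*z) * ∑' m : ℤ, tt τ z (m+1) := tsum_mul_left
    _ = cexp (-(Real.pi:ℂ)*I*τ - 2*(Real.pi:ℂ)*I*z) * ∑' m : ℤ, tt τ z m := by
        congr 1
        exact (Equiv.addRight (1:ℤ)).tsum_eq (tt τ z)
    _ = -cexp (-(Real.pi:ℂ)*I*τ - 2*(Real.pi:ℂ)*I*z) * theta1 τ z := by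
        rw [theta1_tt]; ring

lemma exp_pi_i_half : cexp ((Real.pi:ℂ) * I / 2) = I := by
  have h : (Real.pi:ℂ) * I / 2 = ((Real.pi/2 : ℝ):ℂ) * I := by push_cast; ring
  rw [h, Complex.exp_mul_I, ← Complex.ofReal_cos, ← Complex.ofReal_sin,
    Real.cos_pi_div_two, Real.sin_pi_div_two]
  simp

lemma theta1_eq_jacobi (τ z : ℂ) :
    theta1 τ z = -(I * cexp ((Real.pi:ℂ)*I*τ/4 + (Real.pi:ℂ)*I*z)
      * jacobiTheta₂ (z + (1+τ)/2) τ) := by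
  rw [theta1_tt, jacobiTheta₂, ← tsum_mul_left, neg_inj]
  refine tsum_congr (fun n => ?_)
  calc tt τ z n
      = cexp ((Real.pi:ℂ)*I/2) * cexp ((Real.pi:ℂ)*I*τ/4 + (Real.pi:ℂ)*I*z)
        * cexp (2*(Real.pi:ℂ)*I*(n:ℂ)*(z+(1+τ)/2) + (Real.pi:ℂ)*I*(n:ℂ)^2*τ) := by
        rw [← Complex.exp_add, ← Complex.exp_add]
        simp only [tt]
        exact exp_eq _ _ 0 (by push_cast; ring)
    _ = I * cexp ((Real.pi:ℂ)*I*τ/4 + (Real.pi:ℂ)*I*z)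
        * jacobiTheta₂_term n (z + (1+τ)/2) τ := by
        rw [exp_pi_i_half, jacobiTheta₂_term]

lemma theta1_deriv (τ : ℂ) (hτ : 0 < τ.im) :
    deriv (theta1 τ) 0 = (Real.pi:ℂ) * TD τ := by
  have hfun : theta1 τ = fun z => (-(I * cexp ((Real.pi:ℂ)*I*τ/4 + (Real.pi:ℂ)*I*z))
      * jacobiTheta₂ (z + (1+τ)/2) τ) := by
    funext z
    rw [theta1_eq_jacobi]; ring
  have h1 : HasDerivAt (fun z : ℂ => (Real.pi:ℂ)*I*τ/4 + (Real.pi:ℂ)*I*z) ((Real.pi:ℂ)*I) 0 := by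
    simpa using (((hasDerivAt_id (0:ℂ)).const_mul ((Real.pi:ℂ)*I)).const_add ((Real.pi:ℂ)*I*τ/4))
  have h2 := h1.cexp
  have h2' := h2.const_mul (-I)
  have hadd : HasDerivAt (fun z : ℂ => z + (1+τ)/2) 1 0 := (hasDerivAt_id 0).add_const _
  have hh := hasDerivAt_jacobiTheta₂_fst ((0:ℂ) + (1+τ)/2) hτ
  have h3 := HasDerivAt.comp (𝕜 := ℂ) 0 hh hadd
  have hprod := h2'.mul h3
  have hfeq : (fun y => -I * cexp ((Real.pi:ℂ)*I*τ/4 + (Real.pi:ℂ)*I*y)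
      * ((fun x => jacobiTheta₂ x τ) ∘ fun z => z + (1+τ)/2) y)
      = fun z => (-(I * cexp ((Real.pi:ℂ)*I*τ/4 + (Real.pi:ℂ)*I*z))
        * jacobiTheta₂ (z + (1+τ)/2) τ) := by
    funext y
    simp only [Function.comp_apply]
    ring
  rw [show ((fun y => -I * cexp ((Real.pi:ℂ)*I*τ/4 + (Real.pi:ℂ)*I*y)) * ((fun x => jacobiTheta₂ x τ) ∘ fun z => z + (1+τ)/2)) = _ from hfeq] at hprod
  rw [hfun, hprod.deriv]
  simp only [Function.comp_apply]
  -- now identify with π * TD τ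
  have hS : (Real.pi:ℂ)*I*jacobiTheta₂ ((1+τ)/2) τ + jacobiTheta₂' ((1+τ)/2) τ
      = (Real.pi:ℂ)*I * ∑' n : ℤ, (2*(n:ℂ)+1) * jacobiTheta₂_term n ((1+τ)/2) τ := by
    rw [jacobiTheta₂, jacobiTheta₂', ← tsum_mul_left, ← tsum_mul_left,
      ← Summable.tsum_add (((hasSum_jacobiTheta₂_term ((1+τ)/2) hτ).summable).mul_left _)
        ((hasSum_jacobiTheta₂'_term ((1+τ)/2) hτ).summable)]
    refine tsum_congr (fun n => ?_)
    simp only [jacobiTheta₂'_term]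
    ring
  have hTD : TD τ = cexp ((Real.pi:ℂ)*I*τ/4)
      * ∑' n : ℤ, (2*(n:ℂ)+1) * jacobiTheta₂_term n ((1+τ)/2) τ := by
    rw [TD, ← tsum_mul_left]
    refine tsum_congr (fun n => ?_)
    simp only [eD, e5, jacobiTheta₂_term]
    have h0 : cexp ((Real.pi:ℂ)*I*τ/4) * cexp (2 * (Real.pi:ℂ) * I * (n:ℂ) * ((1+τ)/2)
        + (Real.pi:ℂ) * I * (n:ℂ) ^ 2 * τ)
        = cexp ((Real.pi:ℂ) * I * τ * ((n:ℂ) + 1/2) ^ 2 + (Real.pi:ℂ) * I * (n:ℂ)) := by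
      rw [← Complex.exp_add]
      exact exp_eq _ _ 0 (by push_cast; ring)
    calc (2*(n:ℂ)+1) * cexp ((Real.pi:ℂ) * I * τ * ((n:ℂ) + 1/2) ^ 2 + (Real.pi:ℂ) * I * (n:ℂ))
        = (2*(n:ℂ)+1) * (cexp ((Real.pi:ℂ)*I*τ/4) * cexp (2 * (Real.pi:ℂ) * I * (n:ℂ) * ((1+τ)/2)
          + (Real.pi:ℂ) * I * (n:ℂ) ^ 2 * τ)) := by rw [h0]
      _ = cexp ((Real.pi:ℂ)*I*τ/4) * ((2*(n:ℂ)+1) * cexp (2 * (Real.pi:ℂ) * I * (n:ℂ) * ((1+τ)/2)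
          + (Real.pi:ℂ) * I * (n:ℂ) ^ 2 * τ)) := by ring
  -- final algebra
  simp only [mul_zero, add_zero, zero_add, mul_one]
  set S := ∑' n : ℤ, (2*(n:ℂ)+1) * jacobiTheta₂_term n ((1+τ)/2) τ with hSdef
  rw [hTD]
  have hSum : jacobiTheta₂' ((1+τ)/2) τ = (Real.pi:ℂ)*I*S - (Real.pi:ℂ)*I*jacobiTheta₂ ((1+τ)/2) τ := by
    linear_combination hS
  rw [hSum]
  linear_combination (-(Real.pi:ℂ) * cexp ((Real.pi:ℂ)*I*τ/4) * S) * Complex.I_mul_I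

lemma theta1_deriv_ne (τ : ℂ) (hτ : 0 < τ.im) : deriv (theta1 τ) 0 ≠ 0 := by
  rw [theta1_deriv τ hτ]
  exact mul_ne_zero (Complex.ofReal_ne_zero.mpr Real.pi_ne_zero) (TD_ne τ hτ)


lemma exp_cancel (μ : ℂ) :
    cexp (2*(Real.pi:ℂ)*I*μ) * cexp (-2*(Real.pi:ℂ)*I*μ) = 1 := by
  rw [← Complex.exp_add, show 2*(Real.pi:ℂ)*I*μ + -2*(Real.pi:ℂ)*I*μ = 0 by ring,
    Complex.exp_zero]

lemma Gell_qper (τ w μ : ℂ) :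
    Gell τ (w+τ) μ = cexp (-2*(Real.pi:ℂ)*I*μ) * Gell τ w μ := by
  rw [Gell, Gell]
  rw [show w + τ + μ = (w + μ) + τ by ring, theta1_qper τ (w+μ), theta1_qper τ w]
  rw [show deriv (theta1 τ) 0 * (-cexp (-(Real.pi:ℂ)*I*τ - 2*(Real.pi:ℂ)*I*(w+μ)) * theta1 τ (w+μ))
      = (-cexp (-(Real.pi:ℂ)*I*τ - 2*(Real.pi:ℂ)*I*(w+μ)))
        * (deriv (theta1 τ) 0 * theta1 τ (w+μ)) by ring,
    show (-cexp (-(Real.pi:ℂ)*I*τ - 2*(Real.pi:ℂ)*I*w) * theta1 τ w) * theta1 τ μ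
      = (-cexp (-(Real.pi:ℂ)*I*τ - 2*(Real.pi:ℂ)*I*w)) * (theta1 τ w * theta1 τ μ) by ring,
    mul_div_mul_comm, neg_div_neg_eq, ← Complex.exp_sub]
  congr 2
  ring

lemma Gell_qper' (τ w μ : ℂ) :
    Gell τ (w - τ) μ = cexp (2*(Real.pi:ℂ)*I*μ) * Gell τ w μ := by
  have h := Gell_qper τ (w - τ) μ
  rw [show w - τ + τ = w by ring] at h
  rw [h, ← mul_assoc, exp_cancel, one_mul]

end NoEig


end

open NoEig in
/-- The elliptic Shibukawa–Ueno operator has no eigenvalues: there is no `ρ ∈ ℂ`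
with `G(z,λ)G(−z,λ) = (G(z,κ)+ρ)(G(−z,κ)+ρ)` for all `z` with `ϑ₁(z) ≠ 0`. -/
theorem no_eigenvalue_elliptic (τ : ℂ) (hτ : 0 < τ.im) (lam κ : ℂ)
    (hlam : theta1 τ lam ≠ 0) (hκ : theta1 τ κ ≠ 0)
    (hsum : theta1 τ (κ + lam) ≠ 0) (hdiff : theta1 τ (κ - lam) ≠ 0)
    (hlat : ¬∃ m l : ℤ, 2 * κ = (m : ℂ) + τ * (l : ℂ)) :
    ¬∃ ρ : ℂ, ∀ z : ℂ, theta1 τ z ≠ 0 →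
      Gell τ z lam * Gell τ (-z) lam = (Gell τ z κ + ρ) * (Gell τ (-z) κ + ρ) := by
  rintro ⟨ρ, hEq⟩
  have hcne : deriv (theta1 τ) 0 ≠ 0 := theta1_deriv_ne τ hτ
  have hth : ∀ z, theta1 τ z ≠ 0 → theta1 τ (z+τ) ≠ 0 := by
    intro z hz
    rw [theta1_qper]
    exact mul_ne_zero (neg_ne_zero.mpr (Complex.exp_ne_zero _)) hz
  have hthneg : ∀ z, theta1 τ z ≠ 0 → theta1 τ (-z) ≠ 0 := by
    intro z hz
    rw [theta1_neg]
    exact neg_ne_zero.mpr hz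
  by_cases hρ : ρ = 0
  · -- evaluate at z = κ
    have h := hEq κ hκ
    rw [hρ] at h
    simp only [add_zero] at h
    have hG0 : Gell τ (-κ) κ = 0 := by
      rw [Gell, show -κ + κ = 0 by ring, theta1_zero, mul_zero, zero_div]
    rw [hG0, mul_zero] at h
    have h1 : Gell τ κ lam ≠ 0 := by
      rw [Gell]
      exact div_ne_zero (mul_ne_zero hcne hsum) (mul_ne_zero hκ hlam)
    have h2 : Gell τ (-κ) lam ≠ 0 := by
      rw [Gell]
      apply div_ne_zero
      · apply mul_ne_zero hcne
        rw [show -κ + lam = -(κ - lam) by ring, theta1_neg]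
        exact neg_ne_zero.mpr hdiff
      · apply mul_ne_zero _ hlam
        rw [theta1_neg]
        exact neg_ne_zero.mpr hκ
    exact (mul_ne_zero h1 h2) h
  · -- ρ ≠ 0
    have key : ∀ z, theta1 τ z ≠ 0 →
        ρ * (Gell τ z κ + Gell τ (-z) κ)
          = ρ * (cexp (-2*(Real.pi:ℂ)*I*κ) * Gell τ z κ
            + cexp (2*(Real.pi:ℂ)*I*κ) * Gell τ (-z) κ) := by
      intro z hz
      have h1 := hEq z hz
      have h2 := hEq (z+τ) (hth z hz)
      rw [Gell_qper τ z lam, Gell_qper τ z κ,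
        show -(z+τ) = -z - τ by ring,
        Gell_qper' τ (-z) lam, Gell_qper' τ (-z) κ] at h2
      have hEl := exp_cancel lam
      have hEk := exp_cancel κ
      linear_combination -h1 + h2
        - (Gell τ z lam * Gell τ (-z) lam) * hEl
        + (Gell τ z κ * Gell τ (-z) κ) * hEk
    have hlin : ∀ z, theta1 τ z ≠ 0 →
        Gell τ z κ + Gell τ (-z) κ
          = cexp (-2*(Real.pi:ℂ)*I*κ) * Gell τ z κ
            + cexp (2*(Real.pi:ℂ)*I*κ) * Gell τ (-z) κ :=
      fun z hz => mul_left_cancel₀ hρ (key z hz)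
    have hpI : (2*(Real.pi:ℂ)*I) ≠ 0 := by
      apply mul_ne_zero
      · apply mul_ne_zero two_ne_zero
        exact Complex.ofReal_ne_zero.mpr Real.pi_ne_zero
      · exact Complex.I_ne_zero
    have hα1 : cexp (-2*(Real.pi:ℂ)*I*κ) ≠ 1 := by
      intro h
      rw [Complex.exp_eq_one_iff] at h
      obtain ⟨n, hn⟩ := h
      apply hlat
      refine ⟨-2*n, 0, ?_⟩
      have h2κ : 2*κ = ((-2*n : ℤ):ℂ) := by
        apply mul_left_cancel₀ hpI
        push_cast
        linear_combination -2*hn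
      rw [h2κ]
      push_cast
      ring
    have hβ1 : cexp (2*(Real.pi:ℂ)*I*κ) * cexp (2*(Real.pi:ℂ)*I*κ) ≠ 1 := by
      intro h
      rw [← Complex.exp_add] at h
      rw [Complex.exp_eq_one_iff] at h
      obtain ⟨n, hn⟩ := h
      apply hlat
      refine ⟨n, 0, ?_⟩
      have h2κ : 2*κ = ((n : ℤ):ℂ) := by
        apply mul_left_cancel₀ hpI
        push_cast
        linear_combination hn
      rw [h2κ]
      push_cast
      ring
    have hune : (1 - cexp (-2*(Real.pi:ℂ)*I*κ)) ≠ 0 :=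
      sub_ne_zero_of_ne (Ne.symm hα1)
    have hsq : (1 - cexp (-2*(Real.pi:ℂ)*I*κ))^2 - (cexp (2*(Real.pi:ℂ)*I*κ) - 1)^2 ≠ 0 := by
      have hv : cexp (2*(Real.pi:ℂ)*I*κ) - 1
          = cexp (2*(Real.pi:ℂ)*I*κ) * (1 - cexp (-2*(Real.pi:ℂ)*I*κ)) := by
        have := exp_cancel κ
        linear_combination this
      rw [hv, show (1 - cexp (-2*(Real.pi:ℂ)*I*κ))^2
          - (cexp (2*(Real.pi:ℂ)*I*κ) * (1 - cexp (-2*(Real.pi:ℂ)*I*κ)))^2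
        = (1 - cexp (-2*(Real.pi:ℂ)*I*κ))^2
          * (1 - cexp (2*(Real.pi:ℂ)*I*κ) * cexp (2*(Real.pi:ℂ)*I*κ)) by ring]
      apply mul_ne_zero (pow_ne_zero 2 hune)
      intro h
      apply hβ1
      linear_combination -h
    have hzero : ((1 - cexp (-2*(Real.pi:ℂ)*I*κ))^2
        - (cexp (2*(Real.pi:ℂ)*I*κ) - 1)^2) * Gell τ lam κ = 0 := by
      have e1 := hlin lam hlam
      have e2 := hlin (-lam) (hthneg lam hlam)
      rw [neg_neg] at e2
      linear_combination (1 - cexp (-2*(Real.pi:ℂ)*I*κ)) * e1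
        + (cexp (2*(Real.pi:ℂ)*I*κ) - 1) * e2
    have hG : Gell τ lam κ = 0 := by
      rcases mul_eq_zero.mp hzero with h | h
      · exact absurd h hsq
      · exact h
    rw [Gell] at hG
    have hnum : deriv (theta1 τ) 0 * theta1 τ (lam + κ) ≠ 0 := by
      apply mul_ne_zero hcne
      rw [show lam + κ = κ + lam by ring]
      exact hsum
    have hden : theta1 τ lam * theta1 τ κ ≠ 0 := mul_ne_zero hlam hκ
    exact hnum (by rwa [div_eq_zero_iff, or_iff_left hden] at hG)
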